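/- Let K be a field, M a finite-dimensional K-vector space with n := Module.finrank K M, and Q : QuadraticForm K M. Assume CliffordAlgebra Q is a finite-dimensional K-vector space with Module.finrank K (CliffordAlgebra Q) = 2^n. Let r : K and w : M, set v := algebraMap K (CliffordAlgebra Q) r + ι Q w, and assume v is not in the range of algebraMap K (CliffordAlgebra Q). Then the characteristic polynomial of the K-linear endomorphism of CliffordAlgebra Q given by left multiplication by v equals (X^2 - C (2*r) * X + C (r^2 - Q w))^(2^(n-1)). -/

import Mathlib

open Polynomial Matrix

lemma aux_pow_mulVec {L : Type*} [Field L] {d : ℕ} (B : Matrix (Fin d) (Fin d) L)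
    (α : L) (x : Fin d → L) (hx : B *ᵥ x = α • x) (k : ℕ) :
    (B ^ k) *ᵥ x = α ^ k • x := by
  induction k with
  | zero => simp
  | succ k ih =>
      rw [pow_succ, ← mulVec_mulVec, hx, mulVec_smul, ih, smul_smul, pow_succ]
      ring_nf

lemma aux_aeval_mulVec {L : Type*} [Field L] {d : ℕ} (B : Matrix (Fin d) (Fin d) L)
    (α : L) (x : Fin d → L) (hx : B *ᵥ x = α • x) (q : L[X]) :
    (aeval B q) *ᵥ x = q.eval α • x := by
  induction q using Polynomial.induction_on' with
  | add p q hp hq => rw [map_add, add_mulVec, hp, hq, eval_add, add_smul]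
  | monomial k c =>
      rw [aeval_monomial, eval_monomial, ← mulVec_mulVec, aux_pow_mulVec B α x hx k,
        mulVec_smul]
      have : algebraMap L (Matrix (Fin d) (Fin d) L) c = c • 1 := by
        rw [Algebra.algebraMap_eq_smul_one]
      rw [this, smul_mulVec, one_mulVec, smul_smul, mul_comm]

lemma aux_eval_charpoly {L : Type*} [CommRing L] {d : ℕ} (B : Matrix (Fin d) (Fin d) L) (α : L) :
    (Matrix.charpoly B).eval α = (Matrix.scalar (Fin d) α - B).det := by
  rw [Matrix.charpoly, Polynomial.eval, ← coe_eval₂RingHom, RingHom.map_det]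
  congr 1
  ext i j
  by_cases h : i = j <;>
    simp [h, charmatrix_apply, diagonal_apply, Matrix.sub_apply, scalar_apply]

lemma aux_prod_dvd_pow {R : Type*} [CommMonoid R] (s : Multiset R) (q : R)
    (h : ∀ a ∈ s, a ∣ q) : s.prod ∣ q ^ (Multiset.card s) := by
  induction s using Multiset.induction_on with
  | empty => simp
  | cons a s ih =>
      rw [Multiset.prod_cons, Multiset.card_cons, pow_succ']
      exact mul_dvd_mul (h a (Multiset.mem_cons_self a s))
        (ih fun b hb => h b (Multiset.mem_cons_of_mem hb))

lemma key_charpoly_dvd {K : Type*} [Field K] {d : ℕ} (A : Matrix (Fin d) (Fin d) K)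
    (p : K[X]) (hA : aeval A p = 0) : A.charpoly ∣ p ^ d := by
  set L := AlgebraicClosure K
  set B := A.map (algebraMap K L) with hB
  have hchar : B.charpoly = A.charpoly.map (algebraMap K L) := Matrix.charpoly_map A _
  set pL := p.map (algebraMap K L) with hpL
  have hBp : aeval B pL = 0 := by
    rw [hpL, aeval_map_algebraMap]
    have hBA : B = (AlgHom.mapMatrix (Algebra.ofId K L) : Matrix (Fin d) (Fin d) K →ₐ[K] Matrix (Fin d) (Fin d) L) A := rfl
    rw [hBA, aeval_algHom_apply, hA, map_zero]
  have hroot : ∀ α ∈ B.charpoly.roots, (X - C α) ∣ pL := by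
    intro α hα
    have hev : (Matrix.scalar (Fin d) α - B).det = 0 := by
      rw [← aux_eval_charpoly]
      exact (Polynomial.mem_roots (Matrix.charpoly_monic B).ne_zero).1 hα
    obtain ⟨x, hx0, hxe⟩ := (Matrix.exists_mulVec_eq_zero_iff).2 hev
    have hBx : B *ᵥ x = α • x := by
      rw [sub_mulVec] at hxe
      have hs : Matrix.scalar (Fin d) α *ᵥ x = α • x := by
        rw [show Matrix.scalar (Fin d) α = α • (1 : Matrix (Fin d) (Fin d) L) by
          simp [Matrix.scalar, Matrix.smul_one_eq_diagonal],
          smul_mulVec, one_mulVec]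
      rw [hs] at hxe
      exact (sub_eq_zero.1 hxe).symm
    have h0 := aux_aeval_mulVec B α x hBx pL
    rw [hBp, zero_mulVec] at h0
    have : pL.eval α = 0 := by
      rcases smul_eq_zero.1 h0.symm with h | h
      · exact h
      · exact absurd h hx0
    exact dvd_iff_isRoot.2 this
  have hsp : B.charpoly.Splits := IsAlgClosed.splits _
  have hfac : B.charpoly = (B.charpoly.roots.map fun a => X - C a).prod :=
    (hsp.eq_prod_roots_of_monic (Matrix.charpoly_monic B))
  have hcard : Multiset.card B.charpoly.roots = d := by
    have := hsp.natDegree_eq_card_roots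
    rw [← this, Matrix.charpoly_natDegree_eq_dim, Fintype.card_fin]
  have hdvd : B.charpoly ∣ pL ^ d := by
    have h2 := aux_prod_dvd_pow (Multiset.map (fun a => X - C a) B.charpoly.roots) pL (by
      intro q hq
      obtain ⟨a, ha, rfl⟩ := Multiset.mem_map.1 hq
      exact hroot a ha)
    rwa [Multiset.card_map, hcard, ← hfac] at h2
  rw [hchar, hpL, ← Polynomial.map_pow] at hdvd
  rwa [map_dvd_map _ (algebraMap K L).injective (Matrix.charpoly_monic A)] at hdvd

lemma aux_charpoly_reflect {K : Type*} [Field K] {d : ℕ} (A : Matrix (Fin d) (Fin d) K) (a : K) :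
    (Matrix.scalar (Fin d) a - A).charpoly = (-1) ^ d * (A.charpoly).comp (C a - X) := by
  have hψ : ∀ q : K[X], q.comp (C a - X) = eval₂RingHom (C : K →+* K[X]) (C a - X) q := by
    intro q; rfl
  rw [Matrix.charpoly, Matrix.charpoly, hψ, RingHom.map_det]
  have hmat : charmatrix (Matrix.scalar (Fin d) a - A) =
      -((charmatrix A).map (eval₂RingHom (C : K →+* K[X]) (C a - X))) := by
    ext i j
    by_cases h : i = j
    · subst h
      simp [charmatrix_apply_eq, Matrix.map_apply, Matrix.sub_apply, scalar_apply, diagonal_apply_eq]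
      ring
    · simp [charmatrix_apply_ne _ _ _ h, Matrix.map_apply, Matrix.sub_apply, scalar_apply,
        diagonal_apply_ne _ h]
  rw [hmat, Matrix.det_neg, Fintype.card_fin]
  rfl

section Class
variable {K : Type*} [Field K]

lemma aux_class_irred (p E : K[X]) (hp : Irreducible p) (hpm : p.Monic) (hE : E.Monic)
    (m : ℕ) (hdeg : E.natDegree = 2 * m) (hp2 : p.natDegree = 2)
    (hdvd : E ∣ p ^ (2 * m)) : E = p ^ m := by
  obtain ⟨i, hi, hassoc⟩ := (dvd_prime_pow (hp.prime) _).1 hdvd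
  have hEp : E = p ^ i := eq_of_monic_of_associated hE (hpm.pow i) hassoc
  have hdeg' : E.natDegree = i * 2 := by rw [hEp, natDegree_pow, hp2]
  have : i = m := by omega
  rw [hEp, this]

lemma aux_class_split (a b : K) (E : K[X]) (hE : E.Monic) (m : ℕ)
    (hdeg : E.natDegree = 2 * m)
    (hdvd : E ∣ ((X - C a) * (X - C b)) ^ (2 * m))
    (hsym : E.comp (C (a + b) - X) = E) :
    E = ((X - C a) * (X - C b)) ^ m := by
  by_cases hab : a = b
  · subst hab
    have hdvd' : E ∣ (X - C a) ^ (2 * (2 * m)) := by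
      have hh : ((X - C a) * (X - C a)) ^ (2 * m) = (X - C a) ^ (2 * (2 * m)) := by
        rw [← pow_two, ← pow_mul]
      rwa [hh] at hdvd
    obtain ⟨i, hi, hassoc⟩ := (dvd_prime_pow (prime_X_sub_C a) _).1 hdvd'
    have hEp : E = (X - C a) ^ i :=
      eq_of_monic_of_associated hE ((monic_X_sub_C a).pow i) hassoc
    have hdeg' : E.natDegree = i * 1 := by
      rw [hEp, natDegree_pow, natDegree_X_sub_C]
    have him : i = 2 * m := by omega
    rw [hEp, him, ← pow_two, ← pow_mul, mul_comm 2 m]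
  · -- distinct roots
    obtain ⟨E₁, hEfac, hnd⟩ :=
      exists_eq_pow_rootMultiplicity_mul_and_not_dvd E hE.ne_zero a
    set i := E.rootMultiplicity a with hi
    have hE₁monic : E₁.Monic :=
      ((monic_X_sub_C a).pow _).of_mul_monic_left (hEfac ▸ hE)
    have hE₁dvd : E₁ ∣ (X - C a) ^ (2 * m) * (X - C b) ^ (2 * m) := by
      rw [← mul_pow]
      exact dvd_trans (Dvd.intro_left _ hEfac.symm) hdvd
    have hcop : IsCoprime ((X - C a) ^ (2 * m)) E₁ :=
      (((prime_X_sub_C a).irreducible.coprime_iff_not_dvd).2 hnd).pow_left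
    have hE₁dvd' : E₁ ∣ (X - C b) ^ (2 * m) := hcop.symm.dvd_of_dvd_mul_left hE₁dvd
    obtain ⟨k, hk, hassoc⟩ := (dvd_prime_pow (prime_X_sub_C b) _).1 hE₁dvd'
    have hE₁ : E₁ = (X - C b) ^ k :=
      eq_of_monic_of_associated hE₁monic ((monic_X_sub_C b).pow k) hassoc
    rw [hE₁] at hEfac
    -- symmetry gives i = k
    have hcomp : E.comp (C (a + b) - X) = (-(X - C b)) ^ i * (-(X - C a)) ^ k := by
      rw [hEfac, mul_comp, pow_comp, pow_comp, sub_comp, sub_comp, X_comp, C_comp, C_comp]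
      have h1 : C (a + b) - X - C a = -(X - C b) := by
        rw [C_add]; ring
      have h2 : C (a + b) - X - C b = -(X - C a) := by
        rw [C_add]; ring
      rw [h1, h2]
    have hik : (X - C a) ^ i * (X - C b) ^ k = (X - C b) ^ i * (X - C a) ^ k := by
      have := hsym
      rw [hcomp, hEfac] at this
      have hsgn : (-(X - C b)) ^ i * (-(X - C a)) ^ k
          = (-1) ^ (i + k) * ((X - C b) ^ i * (X - C a) ^ k) := by
        rw [neg_pow (X - C b), neg_pow (X - C a)]; ring
      rw [hsgn] at this
      have hik2 : i + k = 2 * m := by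
        have := congrArg natDegree hEfac
        rw [natDegree_mul (pow_ne_zero _ (X_sub_C_ne_zero a))
          (pow_ne_zero _ (X_sub_C_ne_zero b)), natDegree_pow, natDegree_pow,
          natDegree_X_sub_C, natDegree_X_sub_C, hdeg] at this
        omega
      rw [hik2, pow_mul, neg_one_sq, one_pow, one_mul] at this
      exact this.symm
    have hmulti : i = k := by
      have h1 : rootMultiplicity a ((X - C a) ^ i * (X - C b) ^ k) = i := by
        rw [rootMultiplicity_mul (mul_ne_zero (pow_ne_zero _ (X_sub_C_ne_zero a))
          (pow_ne_zero _ (X_sub_C_ne_zero b))), rootMultiplicity_X_sub_C_pow,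
          rootMultiplicity_eq_zero, add_zero]
        simp only [IsRoot, eval_pow, eval_sub, eval_X, eval_C]
        exact fun h => hab (sub_eq_zero.1 (pow_eq_zero_iff'.1 h).1)
      have h2 : rootMultiplicity a ((X - C b) ^ i * (X - C a) ^ k) = k := by
        rw [rootMultiplicity_mul (mul_ne_zero (pow_ne_zero _ (X_sub_C_ne_zero b))
          (pow_ne_zero _ (X_sub_C_ne_zero a))), rootMultiplicity_X_sub_C_pow,
          rootMultiplicity_eq_zero, zero_add]
        simp only [IsRoot, eval_pow, eval_sub, eval_X, eval_C]
        exact fun h => hab (sub_eq_zero.1 (pow_eq_zero_iff'.1 h).1)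
      rw [← h1, hik, h2]
    have hik2 : i + k = 2 * m := by
      have := congrArg natDegree hEfac
      rw [natDegree_mul (pow_ne_zero _ (X_sub_C_ne_zero a))
        (pow_ne_zero _ (X_sub_C_ne_zero b)), natDegree_pow, natDegree_pow,
        natDegree_X_sub_C, natDegree_X_sub_C, hdeg] at this
      omega
    have him : i = m := by omega
    have hkm : k = m := by omega
    rw [hEfac, him, hkm, ← mul_pow]

end Class

section EndVersions
variable {K V : Type*} [Field K] [AddCommGroup V] [Module K V] [FiniteDimensional K V]

lemma key_charpoly_dvd_end (f : Module.End K V) (p : K[X]) (hf : aeval f p = 0) :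
    f.charpoly ∣ p ^ (Module.finrank K V) := by
  let b := Module.finBasis K V
  have hm : aeval (LinearMap.toMatrix b b f) p = 0 := by
    have hb : LinearMap.toMatrix b b f
        = (LinearMap.toMatrixAlgEquiv b).toAlgHom f := rfl
    rw [hb, aeval_algHom_apply, hf, map_zero]
  have := key_charpoly_dvd _ p hm
  rwa [LinearMap.charpoly_toMatrix] at this

lemma aux_charpoly_reflect_end (f : Module.End K V) (a : K) :
    (algebraMap K (Module.End K V) a - f).charpoly =
      (-1) ^ (Module.finrank K V) * (f.charpoly).comp (C a - X) := by
  let b := Module.finBasis K V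
  rw [← LinearMap.charpoly_toMatrix (algebraMap K (Module.End K V) a - f) b,
    ← LinearMap.charpoly_toMatrix f b, map_sub, LinearMap.toMatrix_algebraMap,
    aux_charpoly_reflect]

end EndVersions


theorem clifford_vector_charpoly {K M : Type*} [Field K] [AddCommGroup M] [Module K M]
    [FiniteDimensional K M] (Q : QuadraticForm K M)
    [FiniteDimensional K (CliffordAlgebra Q)]
    (hdim : Module.finrank K (CliffordAlgebra Q) = 2 ^ Module.finrank K M)
    (r : K) (w : M) (v : CliffordAlgebra Q)
    (hv : v = algebraMap K (CliffordAlgebra Q) r + CliffordAlgebra.ι Q w)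
    (hvr : v ∉ Set.range (algebraMap K (CliffordAlgebra Q))) :
    LinearMap.charpoly (LinearMap.mulLeft K v) =
      (X ^ 2 - C (2 * r) * X + C (r ^ 2 - Q w)) ^ 2 ^ (Module.finrank K M - 1) := by
  set n := Module.finrank K M with hn'
  have hn : n ≠ 0 := by
    intro h0
    have h1 : Module.finrank K (CliffordAlgebra Q) = 1 := by rw [hdim, h0, pow_zero]
    have hnt : Nontrivial (CliffordAlgebra Q) :=
      Module.nontrivial_of_finrank_pos (R := K) (by rw [h1]; omega)
    have hbot := Subalgebra.bot_eq_top_iff_finrank_eq_one.2 h1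
    apply hvr
    have hvtop : v ∈ (⊤ : Subalgebra K (CliffordAlgebra Q)) := trivial
    rw [← hbot, Algebra.mem_bot] at hvtop
    exact hvtop
  set p : K[X] := X ^ 2 - C (2 * r) * X + C (r ^ 2 - Q w) with hp
  have hpform : p = C 1 * X ^ 2 + C (-(2 * r)) * X + C (r ^ 2 - Q w) := by
    rw [hp, C_1, C_neg]; ring
  have hp2 : p.natDegree = 2 := by rw [hpform]; exact natDegree_quadratic one_ne_zero
  have hpm : p.Monic := by
    rw [Monic, leadingCoeff, hp2, hp]
    simp only [coeff_add, coeff_sub, coeff_X_pow, coeff_C_mul, coeff_X, coeff_C]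
    norm_num
  have hvp : aeval v p = 0 := by
    have hι := CliffordAlgebra.ι_sq_scalar Q w
    have hcomm : Commute (algebraMap K (CliffordAlgebra Q) r) (CliffordAlgebra.ι Q w) :=
      Algebra.commutes r _
    have h2r : algebraMap K (CliffordAlgebra Q) (2 * r)
        = 2 * algebraMap K (CliffordAlgebra Q) r := by rw [_root_.map_mul, _root_.map_ofNat]
    have hsub : algebraMap K (CliffordAlgebra Q) (r ^ 2 - Q w)
        = (algebraMap K (CliffordAlgebra Q) r) ^ 2
          - algebraMap K (CliffordAlgebra Q) (Q w) := by rw [_root_.map_sub, map_pow]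
    rw [hp]
    simp only [_root_.map_add, _root_.map_sub, map_pow, _root_.map_mul, aeval_X, aeval_C]
    rw [hv, pow_two, add_mul, mul_add, mul_add, hι, ← hcomm, _root_.map_ofNat]
    noncomm_ring
  set f := LinearMap.mulLeft K v with hf
  have hfp : aeval f p = 0 := by
    have hfl : f = (Algebra.lmul K (CliffordAlgebra Q)) v := by
      ext x; rfl
    rw [hfl, aeval_algHom_apply, hvp, map_zero]
  have hdvd := key_charpoly_dvd_end f p hfp
  rw [hdim] at hdvd
  have hEm : f.charpoly.Monic := f.charpoly_monic
  have hEdeg : f.charpoly.natDegree = 2 ^ n := by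
    rw [f.charpoly_natDegree, hdim]
  set m := 2 ^ (n - 1) with hm
  have h2m : 2 ^ n = 2 * m := by
    have hn1 : n - 1 + 1 = n := Nat.succ_pred_eq_of_pos (Nat.pos_of_ne_zero hn)
    calc 2 ^ n = 2 ^ (n - 1 + 1) := by rw [hn1]
    _ = 2 * m := by rw [pow_succ, hm, Nat.mul_comm]
  rw [h2m] at hdvd hEdeg
  -- symmetry
  have hsym : f.charpoly.comp (C (2 * r) - X) = f.charpoly := by
    have hinv : algebraMap K (Module.End K (CliffordAlgebra Q)) (2 * r) - f
        = LinearMap.mulLeft K (CliffordAlgebra.involute v) := by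
      ext x
      have h2r : algebraMap K (CliffordAlgebra Q) (2 * r)
          = 2 * algebraMap K (CliffordAlgebra Q) r := by rw [_root_.map_mul, _root_.map_ofNat]
      simp only [LinearMap.sub_apply, Module.algebraMap_end_apply, hf,
        LinearMap.mulLeft_apply, hv, map_add, CliffordAlgebra.involute_ι,
        AlgHom.commutes, Algebra.smul_def, h2r]
      noncomm_ring
    have hconj : (LinearMap.mulLeft K (CliffordAlgebra.involute v)).charpoly
        = f.charpoly := by
      let e := (CliffordAlgebra.involuteEquiv (Q := Q)).toLinearEquiv
      have he : LinearMap.mulLeft K (CliffordAlgebra.involute v) = e.conj f := by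
        ext x
        simp only [LinearEquiv.conj_apply, LinearMap.comp_apply, hf,
          LinearMap.mulLeft_apply, LinearEquiv.coe_coe, AlgEquiv.toLinearEquiv_apply,
          AlgEquiv.toLinearEquiv_symm, e]
        rw [show (↑(CliffordAlgebra.involuteEquiv (Q := Q)) : CliffordAlgebra Q ≃ₗ[K] CliffordAlgebra Q).symm x
              = CliffordAlgebra.involute x from rfl]
        rw [show (CliffordAlgebra.involuteEquiv (Q := Q)) (v * CliffordAlgebra.involute x)
              = CliffordAlgebra.involute (v * CliffordAlgebra.involute x) from rfl]
        rw [_root_.map_mul, CliffordAlgebra.involute_involute]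
      rw [he, LinearEquiv.charpoly_conj]
    have hrefl := aux_charpoly_reflect_end f (2 * r)
    rw [hinv, hconj, hdim, h2m] at hrefl
    have heven : ((-1 : K[X])) ^ (2 * m) = 1 := (Even.neg_one_pow ⟨m, by omega⟩)
    rw [heven, one_mul] at hrefl
    exact hrefl.symm
  by_cases hirr : Irreducible p
  · exact aux_class_irred p f.charpoly hirr hpm hEm m hEdeg hp2 hdvd
  · obtain ⟨c₁, c₂, hc0, hc1⟩ :=
      (hpm.not_irreducible_iff_exists_add_mul_eq_coeff hp2).1 hirr
    have hcoeff0 : p.coeff 0 = r ^ 2 - Q w := by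
      rw [hp]
      simp only [coeff_add, coeff_sub, coeff_X_pow, coeff_C_mul, coeff_X, coeff_C]
      norm_num
    have hcoeff1 : p.coeff 1 = -(2 * r) := by
      rw [hp]
      simp only [coeff_add, coeff_sub, coeff_X_pow, coeff_C_mul, coeff_X, coeff_C]
      norm_num
    have hab_sum : (-c₁) + (-c₂) = 2 * r := by
      rw [hcoeff1] at hc1; linear_combination hc1
    have hab_prod : (-c₁) * (-c₂) = r ^ 2 - Q w := by
      rw [hcoeff0] at hc0; linear_combination -hc0
    have hpfac : p = (X - C (-c₁)) * (X - C (-c₂)) := by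
      have hexp : (X - C (-c₁)) * (X - C (-c₂))
          = X ^ 2 - C ((-c₁) + (-c₂)) * X + C ((-c₁) * (-c₂)) := by
        simp only [C_add, C_mul]; ring
      rw [hexp, hab_sum, hab_prod]
    rw [hpfac] at hdvd
    have hsym' : f.charpoly.comp (C ((-c₁) + (-c₂)) - X) = f.charpoly := by
      rw [hab_sum]; exact hsym
    have := aux_class_split (-c₁) (-c₂) f.charpoly hEm m hEdeg hdvd hsym'
    rw [this, ← hpfac]
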